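/- GPA guarantee when the hub is not exhausted: fix τ ∈ (0,1] and a threshold vector γ_1,…,γ_n with γ_i ∈ [0,1] and γ_i ≥ min{1, τ·p·c_i/w_i} for all i (the minimum interpreted as 1 when w_i = 0). Let ℓ be the allocation produced by the GPA policy and suppose s^end = s − Σ_i L_i > 0. Then for every feasible offline allocation ℓ* (nonnegative, with Σ_i Σ_t ℓ*_i^t ≤ s), cost(ℓ) ≤ (1 + (1 − τ)²/(4τ))·cost(ℓ*) + Σ_{i=1}^n 3p·(b_i + c_i). -/

import Mathlib

open Finset

/-- `stock b d ℓ t` is the post-replenishment stock `k^{t+1}` at a single site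
(with `stock b d ℓ 0 = k^1 = b`), under demands `d` and allocations `ℓ`. -/
noncomputable def stock (b : ℕ) (d : ℕ → ℕ) (ℓ : ℕ → ℝ) : ℕ → ℝ
  | 0 => (b : ℝ)
  | t + 1 => max (stock b d ℓ t - (d (t + 1) : ℝ)) 0 + ℓ (t + 1)

/-- Sitewise transport cost `Σ_{t=1}^T w_i ⌈ℓ_i^t / c_i⌉`. -/
noncomputable def transportCost (T : ℕ) (wi : ℝ) (ci : ℕ) (ℓ : ℕ → ℝ) : ℝ :=
  ∑ t ∈ Icc 1 T, wi * (⌈ℓ t / (ci : ℝ)⌉ : ℝ)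

/-- Sitewise lost-sales penalty `Σ_{t=1}^T p (d_i^t − k_i^t)_+`. -/
noncomputable def penaltyCost (T : ℕ) (p : ℝ) (b : ℕ) (d : ℕ → ℕ) (ℓ : ℕ → ℝ) : ℝ :=
  ∑ t ∈ Icc 1 T, p * max ((d t : ℝ) - stock b d ℓ (t - 1)) 0

/-- Total cost of an allocation. -/
noncomputable def totalCost {n : ℕ} (T : ℕ) (w : Fin n → ℝ) (c b : Fin n → ℕ)
    (p : ℝ) (d : Fin n → ℕ → ℕ) (ℓ : Fin n → ℕ → ℝ) : ℝ :=
  ∑ i, (transportCost T (w i) (c i) (ℓ i) + penaltyCost T p (b i) (d i) (ℓ i))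

/-- One time step of GPA: eligible sites are processed in index order; site `i` is
eligible if `r i < b i` and `Lprev i ≤ γ i * Dt i`; an eligible site requests
`⌈(b i − r i)/c i⌉` full shipments and receives the min of that and the remaining
hub supply. Returns the remaining supply and the per-site allocation. -/
noncomputable def gpaInner {n : ℕ} (b c : Fin n → ℕ) (γ : Fin n → ℝ)
    (Dt Lprev r : Fin n → ℕ) (rem : ℕ) : ℕ × (Fin n → ℕ) :=
  (List.finRange n).foldl
    (fun (st : ℕ × (Fin n → ℕ)) (i : Fin n) =>
      if r i < b i ∧ (Lprev i : ℝ) ≤ γ i * (Dt i : ℝ) then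
        let q : ℕ := (b i - r i + c i - 1) / c i
        let give : ℕ := min st.1 (c i * q)
        (st.1 - give, Function.update st.2 i give)
      else st)
    (rem, fun _ => 0)

/-- GPA state after `t` time steps: (remaining hub supply, current stocks `k^{t+1}`,
cumulative allocations `L^t`). Initially `(s, b, 0)`. -/
noncomputable def gpaState {n : ℕ} (b c : Fin n → ℕ) (γ : Fin n → ℝ)
    (d : Fin n → ℕ → ℕ) (s : ℕ) : ℕ → ℕ × (Fin n → ℕ) × (Fin n → ℕ)
  | 0 => (s, b, fun _ => 0)
  | t + 1 =>
    let st := gpaState b c γ d s t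
    let r : Fin n → ℕ := fun i => st.2.1 i - d i (t + 1)
    let Dt : Fin n → ℕ := fun i => ∑ u ∈ Icc 1 (t + 1), d i u
    let res := gpaInner b c γ Dt st.2.2 r st.1
    (res.1, fun i => r i + res.2 i, fun i => st.2.2 i + res.2 i)

/-- Cumulative GPA allocation `L_i^t`. -/
noncomputable def gpaL {n : ℕ} (b c : Fin n → ℕ) (γ : Fin n → ℝ)
    (d : Fin n → ℕ → ℕ) (s : ℕ) (i : Fin n) (t : ℕ) : ℕ :=
  (gpaState b c γ d s t).2.2 i

/-- Per-step GPA allocation `ℓ_i^t` (as a real number). -/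
noncomputable def gpaAlloc {n : ℕ} (b c : Fin n → ℕ) (γ : Fin n → ℝ)
    (d : Fin n → ℕ → ℕ) (s : ℕ) (i : Fin n) (t : ℕ) : ℝ :=
  ((gpaL b c γ d s i t - gpaL b c γ d s i (t - 1) : ℕ) : ℝ)

/-! ### Auxiliary lemmas: the fold inside `gpaInner` -/

section Fold
variable {n : ℕ} (b c : Fin n → ℕ) (γ : Fin n → ℝ) (Dt Lprev r : Fin n → ℕ)

/-- The fold function of `gpaInner`. -/
noncomputable def gpaF : ℕ × (Fin n → ℕ) → Fin n → ℕ × (Fin n → ℕ) :=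
  fun (st : ℕ × (Fin n → ℕ)) (i : Fin n) =>
      if r i < b i ∧ (Lprev i : ℝ) ≤ γ i * (Dt i : ℝ) then
        let q : ℕ := (b i - r i + c i - 1) / c i
        let give : ℕ := min st.1 (c i * q)
        (st.1 - give, Function.update st.2 i give)
      else st

lemma gpaInner_eq (rem : ℕ) :
    gpaInner b c γ Dt Lprev r rem
      = (List.finRange n).foldl (gpaF b c γ Dt Lprev r) (rem, fun _ => 0) := rfl

lemma gpaF_fst_le (st : ℕ × (Fin n → ℕ)) (i : Fin n) :
    (gpaF b c γ Dt Lprev r st i).1 ≤ st.1 := by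
  unfold gpaF
  split
  · exact Nat.sub_le _ _
  · exact le_rfl

lemma gpaF_foldl_fst_le (l : List (Fin n)) (st : ℕ × (Fin n → ℕ)) :
    (l.foldl (gpaF b c γ Dt Lprev r) st).1 ≤ st.1 := by
  induction l generalizing st with
  | nil => exact le_rfl
  | cons a l ih => exact le_trans (ih _) (gpaF_fst_le b c γ Dt Lprev r st a)

lemma gpaF_snd_ne (st : ℕ × (Fin n → ℕ)) (i j : Fin n) (h : j ≠ i) :
    (gpaF b c γ Dt Lprev r st i).2 j = st.2 j := by
  unfold gpaF
  split
  · exact Function.update_of_ne h _ _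
  · rfl

lemma gpaF_foldl_snd_notmem (l : List (Fin n)) (st : ℕ × (Fin n → ℕ)) (j : Fin n)
    (h : j ∉ l) : (l.foldl (gpaF b c γ Dt Lprev r) st).2 j = st.2 j := by
  induction l generalizing st with
  | nil => rfl
  | cons a l ih =>
      rw [List.foldl_cons, ih _ (fun hj => h (List.mem_cons_of_mem _ hj))]
      exact gpaF_snd_ne b c γ Dt Lprev r st a j (fun hj => h (hj ▸ (List.mem_cons_self : a ∈ a :: l)))

lemma gpaF_cons_sum (l : List (Fin n)) (st : ℕ × (Fin n → ℕ)) (hl : l.Nodup)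
    (hz : ∀ j ∈ l, st.2 j = 0) :
    (l.foldl (gpaF b c γ Dt Lprev r) st).1 + ∑ j, (l.foldl (gpaF b c γ Dt Lprev r) st).2 j
      = st.1 + ∑ j, st.2 j := by
  induction l generalizing st with
  | nil => rfl
  | cons a l ih =>
      rw [List.foldl_cons]
      have hnd := List.nodup_cons.mp hl
      have hz2 : ∀ j ∈ l, (gpaF b c γ Dt Lprev r st a).2 j = 0 := by
        intro j hj
        rw [gpaF_snd_ne b c γ Dt Lprev r st a j (fun hja => hnd.1 (hja ▸ hj))]
        exact hz j (List.mem_cons_of_mem _ hj)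
      rw [ih _ hnd.2 hz2]
      have ha0 : st.2 a = 0 := hz a (List.mem_cons_self : a ∈ a :: l)
      unfold gpaF
      split
      · simp only
        rw [Finset.sum_update_of_mem (Finset.mem_univ a)]
        rw [show Finset.univ \ {a} = Finset.univ.erase a by
          ext x; simp [Finset.mem_erase, and_comm]]
        rw [Finset.sum_erase _ ha0]
        have : min st.1 (c a * ((b a - r a + c a - 1) / c a)) ≤ st.1 := Nat.min_le_left _ _
        omega
      · rfl

lemma gpaF_full (l : List (Fin n)) (st : ℕ × (Fin n → ℕ)) (hl : l.Nodup)
    (hz : ∀ j ∈ l, st.2 j = 0)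
    (hpos : 0 < (l.foldl (gpaF b c γ Dt Lprev r) st).1) :
    ∀ i ∈ l, (l.foldl (gpaF b c γ Dt Lprev r) st).2 i
      = if r i < b i ∧ (Lprev i : ℝ) ≤ γ i * (Dt i : ℝ)
        then c i * ((b i - r i + c i - 1) / c i) else 0 := by
  induction l generalizing st with
  | nil => intro i hi; exact absurd hi List.not_mem_nil
  | cons a l ih =>
      intro i hi
      have hnd := List.nodup_cons.mp hl
      have hz2 : ∀ j ∈ l, (gpaF b c γ Dt Lprev r st a).2 j = 0 := by
        intro j hj
        rw [gpaF_snd_ne b c γ Dt Lprev r st a j (fun hja => hnd.1 (hja ▸ hj))]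
        exact hz j (List.mem_cons_of_mem _ hj)
      rw [List.foldl_cons] at hpos ⊢
      rcases List.mem_cons.mp hi with hia | hil
      · subst hia
        rw [gpaF_foldl_snd_notmem b c γ Dt Lprev r l _ i hnd.1]
        have hle := gpaF_foldl_fst_le b c γ Dt Lprev r l (gpaF b c γ Dt Lprev r st i)
        by_cases hcond : r i < b i ∧ (Lprev i : ℝ) ≤ γ i * (Dt i : ℝ)
        · simp only [gpaF, if_pos hcond] at hle hpos ⊢
          simp only [Function.update_self]
          omega
        · simp only [gpaF, if_neg hcond] at hle hpos ⊢
          exact hz i (List.mem_cons_self : i ∈ i :: l)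
      · exact ih _ hnd.2 hz2 hpos i hil

lemma gpaInner_cons (rem : ℕ) :
    (gpaInner b c γ Dt Lprev r rem).1 + ∑ j, (gpaInner b c γ Dt Lprev r rem).2 j = rem := by
  rw [gpaInner_eq]
  have := gpaF_cons_sum b c γ Dt Lprev r (List.finRange n) (rem, fun _ => 0)
    (List.nodup_finRange n) (fun j _ => rfl)
  simpa using this

lemma gpaInner_fst_le (rem : ℕ) : (gpaInner b c γ Dt Lprev r rem).1 ≤ rem := by
  rw [gpaInner_eq]; exact gpaF_foldl_fst_le b c γ Dt Lprev r _ _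

lemma gpaInner_full (rem : ℕ) (hpos : 0 < (gpaInner b c γ Dt Lprev r rem).1) (i : Fin n) :
    (gpaInner b c γ Dt Lprev r rem).2 i
      = if r i < b i ∧ (Lprev i : ℝ) ≤ γ i * (Dt i : ℝ)
        then c i * ((b i - r i + c i - 1) / c i) else 0 := by
  rw [gpaInner_eq] at hpos ⊢
  exact gpaF_full b c γ Dt Lprev r (List.finRange n) _ (List.nodup_finRange n)
    (fun j _ => rfl) hpos i (List.mem_finRange i)

end Fold

/-! ### Auxiliary lemmas: the GPA state -/

section State
variable {n : ℕ} (b c : Fin n → ℕ) (γ : Fin n → ℝ) (d : Fin n → ℕ → ℕ) (s : ℕ)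

/-- The inner result at step `t+1`. -/
noncomputable def gpaRes (t : ℕ) : ℕ × (Fin n → ℕ) :=
  gpaInner b c γ (fun i => ∑ u ∈ Icc 1 (t + 1), d i u)
    (gpaState b c γ d s t).2.2
    (fun i => (gpaState b c γ d s t).2.1 i - d i (t + 1))
    (gpaState b c γ d s t).1

lemma gpaState_succ (t : ℕ) :
    gpaState b c γ d s (t + 1)
      = ((gpaRes b c γ d s t).1,
         fun i => ((gpaState b c γ d s t).2.1 i - d i (t + 1)) + (gpaRes b c γ d s t).2 i,
         fun i => (gpaState b c γ d s t).2.2 i + (gpaRes b c γ d s t).2 i) := rfl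

lemma gpaState_cons (t : ℕ) :
    (gpaState b c γ d s t).1 + ∑ i, (gpaState b c γ d s t).2.2 i = s := by
  induction t with
  | zero => simp [gpaState]
  | succ t ih =>
      rw [gpaState_succ]
      have h := gpaInner_cons b c γ (fun i => ∑ u ∈ Icc 1 (t + 1), d i u)
        (gpaState b c γ d s t).2.2
        (fun i => (gpaState b c γ d s t).2.1 i - d i (t + 1))
        (gpaState b c γ d s t).1
      simp only [Finset.sum_add_distrib]
      have h' : (gpaRes b c γ d s t).1 + ∑ j, (gpaRes b c γ d s t).2 j
          = (gpaState b c γ d s t).1 := h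
      omega

lemma gpaState_fst_mono {t t' : ℕ} (h : t ≤ t') :
    (gpaState b c γ d s t').1 ≤ (gpaState b c γ d s t).1 := by
  induction t' with
  | zero => simp_all
  | succ u ih =>
      rcases Nat.lt_or_ge t (u+1) with hlt | hge
      · have h1 : (gpaState b c γ d s (u+1)).1 ≤ (gpaState b c γ d s u).1 := by
          rw [gpaState_succ]
          exact gpaInner_fst_le _ _ _ _ _ _ _
        exact le_trans h1 (ih (Nat.lt_succ_iff.mp hlt))
      · have : t = u + 1 := le_antisymm h hge
        subst this; exact le_rfl

lemma gpaState_full (t : ℕ) (hpos : 0 < (gpaState b c γ d s (t + 1)).1) (i : Fin n) :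
    (gpaRes b c γ d s t).2 i
      = if (gpaState b c γ d s t).2.1 i - d i (t + 1) < b i
           ∧ ((gpaState b c γ d s t).2.2 i : ℝ) ≤ γ i * ((∑ u ∈ Icc 1 (t + 1), d i u : ℕ) : ℝ)
        then c i * ((b i - ((gpaState b c γ d s t).2.1 i - d i (t + 1)) + c i - 1) / c i)
        else 0 := by
  rw [gpaState_succ] at hpos
  exact gpaInner_full _ _ _ _ _ _ _ hpos i

end State

/-! ### Per-site abbreviations and facts -/

noncomputable def sK {n : ℕ} (b c : Fin n → ℕ) (γ : Fin n → ℝ) (d : Fin n → ℕ → ℕ)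
    (s : ℕ) (i : Fin n) (t : ℕ) : ℕ := (gpaState b c γ d s t).2.1 i

noncomputable def sL {n : ℕ} (b c : Fin n → ℕ) (γ : Fin n → ℝ) (d : Fin n → ℕ → ℕ)
    (s : ℕ) (i : Fin n) (t : ℕ) : ℕ := (gpaState b c γ d s t).2.2 i

def sD {n : ℕ} (d : Fin n → ℕ → ℕ) (i : Fin n) (t : ℕ) : ℕ := ∑ u ∈ Icc 1 t, d i u

noncomputable def sLost {n : ℕ} (b c : Fin n → ℕ) (γ : Fin n → ℝ) (d : Fin n → ℕ → ℕ)
    (s : ℕ) (i : Fin n) (t : ℕ) : ℕ :=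
  ∑ u ∈ Icc 1 t, (d i u - sK b c γ d s i (u - 1))

section Site
variable {n : ℕ} (b c : Fin n → ℕ) (γ : Fin n → ℝ) (d : Fin n → ℕ → ℕ) (s : ℕ) (i : Fin n)

lemma sK_zero : sK b c γ d s i 0 = b i := rfl
lemma sL_zero : sL b c γ d s i 0 = 0 := rfl
lemma sD_zero : sD d i 0 = 0 := by simp [sD]
lemma sLost_zero : sLost b c γ d s i 0 = 0 := by simp [sLost]

lemma sK_succ (t : ℕ) :
    sK b c γ d s i (t + 1) = (sK b c γ d s i t - d i (t + 1)) + (gpaRes b c γ d s t).2 i := by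
  unfold sK; rw [gpaState_succ]

lemma sL_succ (t : ℕ) :
    sL b c γ d s i (t + 1) = sL b c γ d s i t + (gpaRes b c γ d s t).2 i := by
  unfold sL; rw [gpaState_succ]

lemma sD_succ (t : ℕ) : sD d i (t + 1) = sD d i t + d i (t + 1) := by
  unfold sD; rw [Finset.sum_Icc_succ_top (by omega : 1 ≤ t + 1)]

lemma sLost_succ (t : ℕ) :
    sLost b c γ d s i (t + 1) = sLost b c γ d s i t + (d i (t + 1) - sK b c γ d s i t) := by
  unfold sLost; rw [Finset.sum_Icc_succ_top (by omega : 1 ≤ t + 1)]; rfl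

lemma sFull (T t : ℕ) (hT : 0 < (gpaState b c γ d s T).1) (ht : t + 1 ≤ T) :
    (gpaRes b c γ d s t).2 i
      = if sK b c γ d s i t - d i (t + 1) < b i
           ∧ (sL b c γ d s i t : ℝ) ≤ γ i * (sD d i (t + 1) : ℝ)
        then c i * ((b i - (sK b c γ d s i t - d i (t + 1)) + c i - 1) / c i)
        else 0 := by
  have hpos : 0 < (gpaState b c γ d s (t + 1)).1 :=
    lt_of_lt_of_le hT (gpaState_fst_mono b c γ d s ht)
  exact gpaState_full b c γ d s t hpos i

lemma ceil_div_bounds (m cc : ℕ) (hcc : 0 < cc) :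
    m ≤ cc * ((m + cc - 1) / cc) ∧ cc * ((m + cc - 1) / cc) ≤ m + cc - 1 := by
  have h1 := Nat.div_add_mod (m + cc - 1) cc
  have h2 := Nat.mod_lt (m + cc - 1) hcc
  generalize hq : (m + cc - 1) / cc = q at h1 ⊢
  generalize hr : (m + cc - 1) % cc = rr at h1 h2
  generalize hX : cc * q = X at h1 ⊢
  omega

/-- Stocks never exceed `b + c - 1`. -/
lemma sK_le (T : ℕ) (hT : 0 < (gpaState b c γ d s T).1) (hc : 0 < c i) :
    ∀ t, t ≤ T → sK b c γ d s i t ≤ b i + c i - 1 := by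
  intro t
  induction t with
  | zero => intro _; rw [sK_zero]; omega
  | succ u ih =>
      intro hu
      rw [sK_succ, sFull b c γ d s i T u hT hu]
      split_ifs with h
      · obtain ⟨hr, -⟩ := h
        obtain ⟨h1, h2⟩ := ceil_div_bounds (b i - (sK b c γ d s i u - d i (u + 1))) (c i) hc
        generalize hX : c i * ((b i - (sK b c γ d s i u - d i (u + 1)) + c i - 1) / c i) = X
          at h1 h2 ⊢
        omega
      · have := ih (by omega)
        omega

/-- If stock is below `b`, the cumulative allocation exceeds `γ D`. -/
lemma sK_lt_b (T : ℕ) (hT : 0 < (gpaState b c γ d s T).1) (hc : 0 < c i)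
    (t : ℕ) (ht : t + 1 ≤ T) (hKb : sK b c γ d s i (t + 1) < b i) :
    γ i * (sD d i (t + 1) : ℝ) < (sL b c γ d s i (t + 1) : ℝ) := by
  rw [sK_succ, sFull b c γ d s i T t hT ht] at hKb
  rw [sL_succ, sFull b c γ d s i T t hT ht]
  split_ifs at hKb ⊢ with h
  · exfalso
    obtain ⟨hr, -⟩ := h
    obtain ⟨h1, -⟩ := ceil_div_bounds (b i - (sK b c γ d s i t - d i (t + 1))) (c i) hc
    generalize hX : c i * ((b i - (sK b c γ d s i t - d i (t + 1)) + c i - 1) / c i) = X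
      at h1 hKb
    omega
  · rw [not_and_or] at h
    rcases h with h | h
    · omega
    · push_neg at h
      simpa using h

/-- Flow balance. -/
lemma s_balance : ∀ t, sK b c γ d s i t + sD d i t
    = b i + sL b c γ d s i t + sLost b c γ d s i t := by
  intro t
  induction t with
  | zero => rw [sK_zero, sL_zero, sD_zero, sLost_zero]
  | succ u ih =>
      rw [sK_succ, sL_succ, sD_succ, sLost_succ]
      omega

/-- Upper bound on cumulative allocation. -/
lemma sL_le (T : ℕ) (hT : 0 < (gpaState b c γ d s T).1) (hc : 0 < c i) (hγ0 : 0 ≤ γ i) :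
    ∀ t, t ≤ T → (sL b c γ d s i t : ℝ) ≤ γ i * (sD d i t : ℝ) + ((b i : ℝ) + c i) := by
  intro t
  induction t with
  | zero =>
      intro _
      rw [sL_zero, sD_zero]
      push_cast
      positivity
  | succ u ih =>
      intro hu
      have hDmono : (sD d i u : ℝ) ≤ (sD d i (u + 1) : ℝ) := by
        have := sD_succ d i u; exact_mod_cast by omega
      rw [sL_succ, sFull b c γ d s i T u hT hu]
      split_ifs with h
      · obtain ⟨hr, hLD⟩ := h
        obtain ⟨-, h2⟩ := ceil_div_bounds (b i - (sK b c γ d s i u - d i (u + 1))) (c i) hc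
        set N := c i * ((b i - (sK b c γ d s i u - d i (u + 1)) + c i - 1) / c i) with hN
        have h3 : N + 1 ≤ b i + c i := by omega
        have h3' : ((N : ℕ) : ℝ) + 1 ≤ (b i : ℝ) + c i := by exact_mod_cast h3
        push_cast
        linarith
      · have := ih (by omega)
        push_cast
        have : (sL b c γ d s i u : ℝ) ≤ γ i * (sD d i u : ℝ) + ((b i : ℝ) + c i) :=
          ih (by omega)
        nlinarith [mul_le_mul_of_nonneg_left hDmono hγ0]

/-- Upper bound on cumulative lost sales. -/
lemma sLost_le (T : ℕ) (hT : 0 < (gpaState b c γ d s T).1) (hc : 0 < c i)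
    (hγ0 : 0 ≤ γ i) (hγ1 : γ i ≤ 1) (hd : ∀ t ∈ Icc 1 T, d i t ≤ b i) :
    ∀ t, t ≤ T → (sLost b c γ d s i t : ℝ) ≤ (1 - γ i) * (sD d i t : ℝ) + ((b i : ℝ) + c i) := by
  intro t
  induction t with
  | zero =>
      intro _
      rw [sLost_zero, sD_zero]
      push_cast
      norm_num
      positivity
  | succ u ih =>
      intro hu
      have hdb : d i (u + 1) ≤ b i := hd (u + 1) (by simp; omega)
      have hDsucc : sD d i (u + 1) = sD d i u + d i (u + 1) := sD_succ d i u
      have hγ1' : (0:ℝ) ≤ 1 - γ i := by linarith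
      have hDmono : (sD d i u : ℝ) ≤ (sD d i (u + 1) : ℝ) := by exact_mod_cast by omega
      by_cases hK : sK b c γ d s i u < b i
      · rcases Nat.eq_zero_or_pos u with hu0 | hupos
        · exfalso; rw [hu0, sK_zero] at hK; omega
        obtain ⟨v, rfl⟩ : ∃ v, u = v + 1 := ⟨u - 1, by omega⟩
        have hL := sK_lt_b b c γ d s i T hT hc v (by omega) hK
        have hbal := s_balance b c γ d s i (v + 1 + 1)
        have hbalR : (sK b c γ d s i (v+1+1) : ℝ) + (sD d i (v+1+1) : ℝ)
            = (b i : ℝ) + (sL b c γ d s i (v+1+1) : ℝ) + (sLost b c γ d s i (v+1+1) : ℝ) := by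
          exact_mod_cast hbal
        have hKle : sK b c γ d s i (v+1+1) ≤ b i + c i - 1 :=
          sK_le b c γ d s i T hT hc (v+1+1) hu
        have hKleR : (sK b c γ d s i (v+1+1) : ℝ) ≤ (b i : ℝ) + c i - 1 := by
          have h5 : sK b c γ d s i (v+1+1) + 1 ≤ b i + c i := by omega
          have h6 := (Nat.cast_le (α := ℝ)).mpr h5
          push_cast at h6
          linarith
        have hLmono : (sL b c γ d s i (v+1) : ℝ) ≤ (sL b c γ d s i (v+1+1) : ℝ) := by
          have := sL_succ b c γ d s i (v+1); exact_mod_cast by omega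
        have hdbR : (d i (v+1+1) : ℝ) ≤ (b i : ℝ) := by exact_mod_cast hdb
        have hDsuccR : (sD d i (v+1+1) : ℝ) = (sD d i (v+1) : ℝ) + (d i (v+1+1) : ℝ) := by
          exact_mod_cast hDsucc
        nlinarith [mul_le_mul_of_nonneg_left hDmono hγ1']
      · push_neg at hK
        have hstep : sLost b c γ d s i (u + 1) = sLost b c γ d s i u := by
          rw [sLost_succ]; omega
        rw [hstep]
        have := ih (by omega)
        nlinarith [mul_le_mul_of_nonneg_left hDmono hγ1']

/-! ### GPA site costs -/

/-- The per-step GPA allocation for site `i`, as a function of time. -/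
noncomputable def sAlloc : ℕ → ℝ := fun t => gpaAlloc b c γ d s i t

lemma sAlloc_succ (t : ℕ) : sAlloc b c γ d s i (t + 1) = ((gpaRes b c γ d s t).2 i : ℝ) := by
  show ((gpaL b c γ d s i (t+1) - gpaL b c γ d s i ((t+1) - 1) : ℕ) : ℝ) = _
  have h : gpaL b c γ d s i (t+1) = gpaL b c γ d s i t + (gpaRes b c γ d s t).2 i :=
    sL_succ b c γ d s i t
  rw [show (t + 1 : ℕ) - 1 = t from rfl, h]
  congr 1
  omega

lemma cast_sub_max (a e : ℕ) : ((a - e : ℕ) : ℝ) = max ((a : ℝ) - (e : ℝ)) 0 := by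
  rcases le_total e a with h | h
  · rw [max_eq_left (by exact_mod_cast sub_nonneg.mpr ((Nat.cast_le (α := ℝ)).mpr h)),
      Nat.cast_sub h]
  · rw [Nat.sub_eq_zero_of_le h, max_eq_right]
    · simp
    · have : (a : ℝ) ≤ (e : ℝ) := by exact_mod_cast h
      linarith

lemma stock_eq_sK : ∀ t, stock (b i) (d i) (sAlloc b c γ d s i) t = (sK b c γ d s i t : ℝ) := by
  intro t
  induction t with
  | zero => rw [sK_zero]; rfl
  | succ u ih =>
      show max (stock (b i) (d i) (sAlloc b c γ d s i) u - (d i (u + 1) : ℝ)) 0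
          + sAlloc b c γ d s i (u + 1) = _
      rw [ih, sAlloc_succ, sK_succ, ← cast_sub_max]
      push_cast
      ring

lemma sAlloc_sum : ∀ t, ∑ u ∈ Icc 1 t, sAlloc b c γ d s i u = (sL b c γ d s i t : ℝ) := by
  intro t
  induction t with
  | zero => rw [sL_zero]; simp
  | succ u ih =>
      rw [Finset.sum_Icc_succ_top (by omega : 1 ≤ u + 1), ih, sAlloc_succ, sL_succ]
      push_cast
      ring

lemma site_transport (T : ℕ) (hT : 0 < (gpaState b c γ d s T).1) (wi : ℝ) (hci : 0 < c i) :
    transportCost T wi (c i) (sAlloc b c γ d s i)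
      = (wi / c i) * (sL b c γ d s i T : ℝ) := by
  rw [← sAlloc_sum b c γ d s i T, Finset.mul_sum, transportCost]
  refine Finset.sum_congr rfl fun t ht => ?_
  have ht1 : 1 ≤ t := (Finset.mem_Icc.mp ht).1
  have htT : t ≤ T := (Finset.mem_Icc.mp ht).2
  obtain ⟨u, rfl⟩ : ∃ u, t = u + 1 := ⟨t - 1, by omega⟩
  obtain ⟨a, ha⟩ : ∃ a, (gpaRes b c γ d s u).2 i = c i * a := by
    rw [sFull b c γ d s i T u hT htT]
    split_ifs
    · exact ⟨_, rfl⟩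
    · exact ⟨0, (mul_zero _).symm⟩
  rw [sAlloc_succ, ha]
  have hc0 : ((c i : ℕ) : ℝ) ≠ 0 := by positivity
  have hdiv : ((c i * a : ℕ) : ℝ) / (c i : ℝ) = (a : ℝ) := by
    push_cast
    field_simp
  rw [hdiv, Int.ceil_natCast]
  push_cast
  field_simp

lemma site_penalty (T : ℕ) (p : ℝ) :
    penaltyCost T p (b i) (d i) (sAlloc b c γ d s i)
      = p * (sLost b c γ d s i T : ℝ) := by
  rw [penaltyCost, sLost]
  push_cast
  rw [Finset.mul_sum]
  refine Finset.sum_congr rfl fun t ht => ?_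
  rw [stock_eq_sK, cast_sub_max]

end Site

/-! ### Offline bounds -/

lemma offline_stock_nonneg (b : ℕ) (d : ℕ → ℕ) (ℓ : ℕ → ℝ) (T : ℕ)
    (hℓ : ∀ t ∈ Icc 1 T, 0 ≤ ℓ t) : ∀ t, t ≤ T → 0 ≤ stock b d ℓ t := by
  intro t
  induction t with
  | zero => intro _; simp [stock]
  | succ u ih =>
      intro hu
      have h1 : 0 ≤ ℓ (u + 1) := hℓ (u + 1) (by simp; omega)
      have h2 : 0 ≤ max (stock b d ℓ u - (d (u + 1) : ℝ)) 0 := le_max_right _ _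
      simpa [stock] using add_nonneg h2 h1

lemma max_sub_identity (x y : ℝ) : max (x - y) 0 = x - y + max (y - x) 0 := by
  rcases le_total x y with h | h
  · rw [max_eq_right (by linarith), max_eq_left (by linarith)]; ring
  · rw [max_eq_left (by linarith), max_eq_right (by linarith)]; ring

lemma offline_balance (b : ℕ) (d : ℕ → ℕ) (ℓ : ℕ → ℝ) : ∀ t,
    stock b d ℓ t + ∑ u ∈ Icc 1 t, (d u : ℝ)
      = (b : ℝ) + (∑ u ∈ Icc 1 t, ℓ u)
        + ∑ u ∈ Icc 1 t, max ((d u : ℝ) - stock b d ℓ (u - 1)) 0 := by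
  intro t
  induction t with
  | zero => simp [stock]
  | succ u ih =>
      rw [Finset.sum_Icc_succ_top (by omega : 1 ≤ u + 1),
        Finset.sum_Icc_succ_top (by omega : 1 ≤ u + 1),
        Finset.sum_Icc_succ_top (by omega : 1 ≤ u + 1)]
      have hs : stock b d ℓ (u + 1)
          = max (stock b d ℓ u - (d (u + 1) : ℝ)) 0 + ℓ (u + 1) := rfl
      have hmx := max_sub_identity (stock b d ℓ u) ((d (u + 1) : ℝ))
      have hu1 : (u + 1 : ℕ) - 1 = u := rfl
      rw [hs, hu1]
      rw [show max ((d (u+1) : ℝ) - stock b d ℓ u) 0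
          = max (stock b d ℓ u - (d (u + 1) : ℝ)) 0 - stock b d ℓ u + (d (u+1):ℝ) by
        rw [hmx]; ring]
      linarith

lemma offline_penalty_ge (T : ℕ) (p : ℝ) (b : ℕ) (d : ℕ → ℕ) (ℓ : ℕ → ℝ)
    (hp : 0 ≤ p) (hℓ : ∀ t ∈ Icc 1 T, 0 ≤ ℓ t) :
    p * max ((∑ u ∈ Icc 1 T, (d u : ℝ)) - (b : ℝ) - ∑ u ∈ Icc 1 T, ℓ u) 0
      ≤ penaltyCost T p b d ℓ := by
  have hbal := offline_balance b d ℓ T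
  have hst := offline_stock_nonneg b d ℓ T hℓ T le_rfl
  have hS : 0 ≤ ∑ u ∈ Icc 1 T, max ((d u : ℝ) - stock b d ℓ (u - 1)) 0 :=
    Finset.sum_nonneg fun u _ => le_max_right _ _
  have hmax : max ((∑ u ∈ Icc 1 T, (d u : ℝ)) - (b : ℝ) - ∑ u ∈ Icc 1 T, ℓ u) 0
      ≤ ∑ u ∈ Icc 1 T, max ((d u : ℝ) - stock b d ℓ (u - 1)) 0 :=
    max_le (by linarith) hS
  have hpen : penaltyCost T p b d ℓ
      = p * ∑ u ∈ Icc 1 T, max ((d u : ℝ) - stock b d ℓ (u - 1)) 0 := by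
    rw [penaltyCost, Finset.mul_sum]
  rw [hpen]
  exact mul_le_mul_of_nonneg_left hmax hp

lemma offline_transport_ge (T : ℕ) (wi : ℝ) (ci : ℕ) (ℓ : ℕ → ℝ)
    (hw : 0 ≤ wi) :
    (wi / ci) * ∑ t ∈ Icc 1 T, ℓ t ≤ transportCost T wi ci ℓ := by
  rw [Finset.mul_sum, transportCost]
  refine Finset.sum_le_sum fun t _ => ?_
  have h1 : ℓ t / (ci : ℝ) ≤ (⌈ℓ t / (ci : ℝ)⌉ : ℝ) := Int.le_ceil _
  calc wi / ci * ℓ t = wi * (ℓ t / ci) := by ring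
    _ ≤ wi * (⌈ℓ t / (ci : ℝ)⌉ : ℝ) := mul_le_mul_of_nonneg_left h1 hw

/-! ### The key scalar inequality -/

lemma rate_le (p v γi τ : ℝ) (hp : 0 ≤ p) (hv0 : 0 ≤ v) (hvp : v ≤ p)
    (hγ1 : γi ≤ 1) (hτ0 : 0 < τ)
    (hz : v = 0 → γi = 1) (hmin : 0 < v → min 1 (τ * p / v) ≤ γi) :
    γi * v + (1 - γi) * p ≤ (1 + (1 - τ) ^ 2 / (4 * τ)) * v := by
  obtain ⟨α, hαdef⟩ : ∃ α : ℝ, α = 1 + (1 - τ) ^ 2 / (4 * τ) := ⟨_, rfl⟩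
  rw [← hαdef]
  have hα1 : 1 ≤ α := by
    have h : 0 ≤ (1 - τ) ^ 2 / (4 * τ) := by positivity
    linarith [hαdef.ge, hαdef.le]
  rcases eq_or_lt_of_le hv0 with h0 | hvpos
  · rw [hz h0.symm]
    simp [← h0]
  · have hm := hmin hvpos
    rcases le_total 1 (τ * p / v) with h | h
    · have hγeq : γi = 1 := le_antisymm hγ1 (le_trans (by rw [min_eq_left h]) hm)
      rw [hγeq]
      nlinarith
    · rw [min_eq_right h] at hm
      obtain ⟨g, hgdef⟩ : ∃ g : ℝ, g = τ * p / v := ⟨_, rfl⟩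
      rw [← hgdef] at hm
      have hgv : g * v = τ * p := by rw [hgdef]; exact div_mul_cancel₀ _ (ne_of_gt hvpos)
      have hαv : 0 ≤ α * v ^ 2 - (1 + τ) * p * v + τ * p ^ 2 := by
        have h4 : 4 * τ * (α * v ^ 2 - (1 + τ) * p * v + τ * p ^ 2)
            = ((1 + τ) * v - 2 * τ * p) ^ 2 := by
          rw [hαdef]
          field_simp
          ring
        nlinarith [sq_nonneg ((1 + τ) * v - 2 * τ * p)]
      have h4 : 0 ≤ (γi - g) * (p - v) := mul_nonneg (by linarith) (by linarith)
      have h5 : 0 ≤ (γi - g) * (p - v) * v := mul_nonneg h4 (le_of_lt hvpos)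
      nlinarith [hαv, hvpos, hgv, h5]

lemma key_ineq (p v γi τ D L B : ℝ) (hp : 0 ≤ p) (hv0 : 0 ≤ v) (hvp : v ≤ p)
    (hγ0 : 0 ≤ γi) (hγ1 : γi ≤ 1) (hτ0 : 0 < τ)
    (hz : v = 0 → γi = 1) (hmin : 0 < v → min 1 (τ * p / v) ≤ γi)
    (hD : 0 ≤ D) (hL : 0 ≤ L) (hB : 0 ≤ B) :
    γi * v * D + (1 - γi) * p * D
      ≤ (1 + (1 - τ) ^ 2 / (4 * τ)) * (v * L + p * max (D - B - L) 0) + p * B := by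
  have hrate := rate_le p v γi τ hp hv0 hvp hγ1 hτ0 hz hmin
  obtain ⟨α, hαdef⟩ : ∃ α : ℝ, α = 1 + (1 - τ) ^ 2 / (4 * τ) := ⟨_, rfl⟩
  rw [← hαdef] at hrate ⊢
  have hα1 : 1 ≤ α := by
    have h : 0 ≤ (1 - τ) ^ 2 / (4 * τ) := by positivity
    linarith [hαdef.le]
  have hratep : γi * v + (1 - γi) * p ≤ p := by nlinarith
  have hrate0 : 0 ≤ γi * v + (1 - γi) * p := by nlinarith
  have hmax0 : 0 ≤ max (D - B - L) 0 := le_max_right _ _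
  rcases le_total D B with hDB | hBD
  · have h1 : γi * v * D + (1 - γi) * p * D ≤ p * D := by nlinarith
    have h2 : 0 ≤ v * L + p * max (D - B - L) 0 := by positivity
    nlinarith
  · have hlb : v * (D - B) ≤ v * L + p * max (D - B - L) 0 := by
      rcases le_total (D - B) L with h | h
      · have : v * (D - B) ≤ v * L := mul_le_mul_of_nonneg_left h hv0
        nlinarith
      · rw [max_eq_left (by linarith)]
        nlinarith
    have h1 : (γi * v + (1 - γi) * p) * (D - B) ≤ α * v * (D - B) :=
      mul_le_mul_of_nonneg_right hrate (by linarith)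
    have h2 : (γi * v + (1 - γi) * p) * B ≤ p * B :=
      mul_le_mul_of_nonneg_right hratep hB
    have h3 : α * v * (D - B) ≤ α * (v * L + p * max (D - B - L) 0) := by
      have := mul_le_mul_of_nonneg_left hlb (show (0:ℝ) ≤ α by linarith)
      linarith
    nlinarith

/-- **GPA guarantee when the hub is not exhausted.** Fix `τ ∈ (0,1]` and
thresholds with `γ i ≥ min{1, τ·p·c_i/w_i}` (interpreted as `1` when `w i = 0`).
If `s^end > 0`, then for every feasible offline allocation `ℓ*`,
`cost(ℓ) ≤ (1 + (1−τ)²/(4τ))·cost(ℓ*) + Σ_i 3p(b_i + c_i)`. -/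
theorem gpa_guarantee_not_exhausted
    (n T : ℕ) (c b : Fin n → ℕ) (hc : ∀ i, 1 ≤ c i)
    (w : Fin n → ℝ) (hw : ∀ i, 0 ≤ w i)
    (p : ℝ) (hp : 0 ≤ p) (hwp : ∀ i, w i ≤ p * c i)
    (s : ℕ) (d : Fin n → ℕ → ℕ) (hd : ∀ i, ∀ t ∈ Icc 1 T, d i t ≤ b i)
    (τ : ℝ) (hτ0 : 0 < τ) (hτ1 : τ ≤ 1)
    (γ : Fin n → ℝ) (hγ : ∀ i, 0 ≤ γ i ∧ γ i ≤ 1)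
    (hγlb : ∀ i, (if w i = 0 then (1 : ℝ) else min 1 (τ * p * c i / w i)) ≤ γ i)
    (ℓ : Fin n → ℕ → ℝ) (hℓ : ℓ = fun i t => gpaAlloc b c γ d s i t)
    (hend : (∑ i, gpaL b c γ d s i T) < s)
    (ℓs : Fin n → ℕ → ℝ) (hℓs : ∀ i, ∀ t ∈ Icc 1 T, 0 ≤ ℓs i t)
    (hfeas : ∑ i, ∑ t ∈ Icc 1 T, ℓs i t ≤ (s : ℝ))
    :
    totalCost T w c b p d ℓ
      ≤ (1 + (1 - τ) ^ 2 / (4 * τ)) * totalCost T w c b p d ℓs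
        + ∑ i, 3 * p * ((b i : ℝ) + c i) := by
  subst hℓ
  -- the hub supply is never exhausted
  have hT : 0 < (gpaState b c γ d s T).1 := by
    have h := gpaState_cons b c γ d s T
    have hend' : ∑ i, (gpaState b c γ d s T).2.2 i < s := hend
    omega
  rw [totalCost, totalCost, Finset.mul_sum, ← Finset.sum_add_distrib]
  refine Finset.sum_le_sum fun i _ => ?_
  -- per-site quantities
  have hci : 0 < c i := hc i
  have hciR : (0:ℝ) < (c i : ℝ) := by exact_mod_cast hci
  have hγ0 : 0 ≤ γ i := (hγ i).1
  have hγ1 : γ i ≤ 1 := (hγ i).2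
  have hv0 : 0 ≤ w i / c i := div_nonneg (hw i) (le_of_lt hciR)
  have hvp : w i / c i ≤ p := by
    rw [div_le_iff₀ hciR]
    exact hwp i
  have hz : w i / c i = 0 → γ i = 1 := by
    intro h
    have hw0 : w i = 0 := by
      rcases div_eq_zero_iff.mp h with h' | h'
      · exact h'
      · exact absurd h' (ne_of_gt hciR)
    have := hγlb i
    rw [if_pos hw0] at this
    exact le_antisymm hγ1 this
  have hmin : 0 < w i / c i → min 1 (τ * p / (w i / c i)) ≤ γ i := by
    intro h
    have hw0 : w i ≠ 0 := by
      intro h'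
      rw [h', zero_div] at h
      exact lt_irrefl _ h
    have := hγlb i
    rw [if_neg hw0] at this
    rw [div_div_eq_mul_div]
    exact this
  have hD0 : (0:ℝ) ≤ (sD d i T : ℝ) := Nat.cast_nonneg _
  have hL0 : (0:ℝ) ≤ ∑ t ∈ Icc 1 T, ℓs i t := Finset.sum_nonneg (hℓs i)
  have hB0 : (0:ℝ) ≤ (b i : ℝ) := Nat.cast_nonneg _
  have hbc0 : (0:ℝ) ≤ (b i : ℝ) + c i := by positivity
  -- GPA cost bounds
  have htr : transportCost T (w i) (c i) (sAlloc b c γ d s i)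
      = (w i / c i) * (sL b c γ d s i T : ℝ) :=
    site_transport b c γ d s i T hT (w i) hci
  have hpe : penaltyCost T p (b i) (d i) (sAlloc b c γ d s i)
      = p * (sLost b c γ d s i T : ℝ) :=
    site_penalty b c γ d s i T p
  have hLle : (sL b c γ d s i T : ℝ) ≤ γ i * (sD d i T : ℝ) + ((b i : ℝ) + c i) :=
    sL_le b c γ d s i T hT hci hγ0 T le_rfl
  have hLostle : (sLost b c γ d s i T : ℝ)
      ≤ (1 - γ i) * (sD d i T : ℝ) + ((b i : ℝ) + c i) :=
    sLost_le b c γ d s i T hT hci hγ0 hγ1 (hd i) T le_rfl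
  -- offline cost bounds
  have hcast : (sD d i T : ℝ) = ∑ u ∈ Icc 1 T, (d i u : ℝ) := by
    rw [sD]; push_cast; rfl
  have hot : (w i / c i) * ∑ t ∈ Icc 1 T, ℓs i t ≤ transportCost T (w i) (c i) (ℓs i) :=
    offline_transport_ge T (w i) (c i) (ℓs i) (hw i)
  have hop : p * max ((sD d i T : ℝ) - (b i : ℝ) - ∑ t ∈ Icc 1 T, ℓs i t) 0
      ≤ penaltyCost T p (b i) (d i) (ℓs i) := by
    rw [hcast]
    exact offline_penalty_ge T p (b i) (d i) (ℓs i) hp (hℓs i)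
  -- key inequality
  have hkey := key_ineq p (w i / c i) (γ i) τ (sD d i T : ℝ)
    (∑ t ∈ Icc 1 T, ℓs i t) (b i : ℝ) hp hv0 hvp hγ0 hγ1 hτ0 hz hmin hD0 hL0 hB0
  -- assemble
  obtain ⟨α, hαdef⟩ : ∃ α : ℝ, α = 1 + (1 - τ) ^ 2 / (4 * τ) := ⟨_, rfl⟩
  rw [← hαdef] at hkey ⊢
  have hα0 : 0 ≤ α := by
    have h : 0 ≤ (1 - τ) ^ 2 / (4 * τ) := by positivity
    linarith [hαdef.le]
  have hA := mul_le_mul_of_nonneg_left hLle hv0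
  have hB := mul_le_mul_of_nonneg_left hLostle hp
  have hE : α * ((w i / c i) * (∑ t ∈ Icc 1 T, ℓs i t)
        + p * max ((sD d i T : ℝ) - (b i : ℝ) - ∑ t ∈ Icc 1 T, ℓs i t) 0)
      ≤ α * (transportCost T (w i) (c i) (ℓs i) + penaltyCost T p (b i) (d i) (ℓs i)) :=
    mul_le_mul_of_nonneg_left (add_le_add hot hop) hα0
  have hF : (w i / c i) * ((b i : ℝ) + c i) ≤ p * ((b i : ℝ) + c i) :=
    mul_le_mul_of_nonneg_right hvp hbc0
  have hG : 0 ≤ p * (c i : ℝ) := mul_nonneg hp (le_of_lt hciR)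
  show transportCost T (w i) (c i) (sAlloc b c γ d s i)
      + penaltyCost T p (b i) (d i) (sAlloc b c γ d s i) ≤ _
  rw [htr, hpe]
  nlinarith [hA, hB, hE, hF, hG, hkey]
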